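/- arXiv:1907.10720 — 7 statements merged into one kernel-verified Lean document; each statement's English description precedes it below -/
import Mathlib

section
/- Let δ, μ, σ > 0. If two high-frequency traders with speeds λ_i, λ_{-i} > 0 quote an ask price such that the market-maker payoff -(δ/(δ+μ))·(λ_{-i}/(λ_i+λ_{-i}))·(σ - ask) + (μ/(δ+μ))·ask equals the bandit payoff (δ/(δ+μ))·(λ_i/(λ_i+λ_{-i}))·(σ - ask), then ask = δσ/(δ+μ), independently of λ_i and λ_{-i}. -/
theorem stmt_0 (δ μ σ ask li lmi : ℝ)
    (hδ : 0 < δ) (hμ : 0 < μ) (hσ : 0 < σ) (hli : 0 < li) (hlmi : 0 < lmi)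
    (h : -(δ / (δ + μ)) * (lmi / (li + lmi)) * (σ - ask) + (μ / (δ + μ)) * ask
        = (δ / (δ + μ)) * (li / (li + lmi)) * (σ - ask)) :
    ask = δ * σ / (δ + μ) := by
  have h1 : (δ + μ) ≠ 0 := by positivity
  have h2 : (li + lmi) ≠ 0 := by positivity
  field_simp at h
  have key : (ask * (δ + μ) - δ * σ) * ((δ + μ) ^ 2 * (li + lmi) ^ 2) = 0 := by
    linear_combination ((δ + μ) ^ 2 * (li + lmi)) * h
  have h3 : ((δ + μ) ^ 2 * (li + lmi) ^ 2) ≠ 0 := by positivity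
  have h4 : ask * (δ + μ) - δ * σ = 0 := by
    rcases mul_eq_zero.mp key with hk | hk
    · exact hk
    · exact absurd hk h3
  field_simp
  linarith
end

section
/- Let δ, μ, σ, κ > 0 and define π(λ_i, λ_{-i}) = (λ_i/(λ_i+λ_{-i}))·δμσ/(δ+μ)² − (1/(δ+μ) + (δ/(δ+μ))·1/(λ_i+λ_{-i}))·λ_i·κ·(λ_i+λ_{-i}). Then the unique symmetric solution λ_i = λ_{-i} = λ > 0 of the first-order condition ∂π/∂λ_i = 0 is λ = (−δ + √(δ² + 3δμσ/(κ(δ+μ))))/6. -/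
noncomputable def piPC (δ μ σ κ : ℝ) (li lmi : ℝ) : ℝ :=
  (li / (li + lmi)) * (δ * μ * σ / (δ + μ) ^ 2)
    - (1 / (δ + μ) + (δ / (δ + μ)) * (1 / (li + lmi))) * (li * κ * (li + lmi))

theorem stmt_2 (δ μ σ κ : ℝ) (hδ : 0 < δ) (hμ : 0 < μ) (hσ : 0 < σ) (hκ : 0 < κ) :
    ∀ l : ℝ, 0 < l →
      (deriv (fun x => piPC δ μ σ κ x l) l = 0 ↔
        l = (-δ + Real.sqrt (δ ^ 2 + 3 * δ * μ * σ / (κ * (δ + μ)))) / 6) := by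
  intro l hl
  have hdm : (0:ℝ) < δ + μ := by linarith
  have h2l : l + l ≠ 0 := by positivity
  have hl' : l ≠ 0 := ne_of_gt hl
  -- derivative computation
  have h1 : HasDerivAt (fun x : ℝ => x + l) 1 l := (hasDerivAt_id l).add_const l
  have hu : HasDerivAt (fun x : ℝ => x / (x + l))
      ((1 * (l + l) - l * 1) / (l + l) ^ 2) l := (hasDerivAt_id l).div h1 h2l
  have hinv : HasDerivAt (fun x : ℝ => 1 / (x + l))
      ((0 * (l + l) - 1 * 1) / (l + l) ^ 2) l := (hasDerivAt_const l 1).div h1 h2l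
  have hv : HasDerivAt (fun x : ℝ => 1 / (δ + μ) + (δ / (δ + μ)) * (1 / (x + l)))
      (0 + (δ / (δ + μ)) * ((0 * (l + l) - 1 * 1) / (l + l) ^ 2)) l :=
    (hasDerivAt_const l (1 / (δ + μ))).add (hinv.const_mul _)
  have hw : HasDerivAt (fun x : ℝ => x * κ * (x + l))
      (1 * κ * (l + l) + l * κ * 1) l := ((hasDerivAt_id l).mul_const κ).mul h1
  have hf : HasDerivAt (fun x : ℝ => piPC δ μ σ κ x l)
      (((1 * (l + l) - l * 1) / (l + l) ^ 2) * (δ * μ * σ / (δ + μ) ^ 2)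
        - ((0 + (δ / (δ + μ)) * ((0 * (l + l) - 1 * 1) / (l + l) ^ 2)) * (l * κ * (l + l))
            + (1 / (δ + μ) + (δ / (δ + μ)) * (1 / (l + l))) * (1 * κ * (l + l) + l * κ * 1))) l := by
    unfold piPC
    exact (hu.mul_const _).sub (hv.mul hw)
  rw [hf.deriv]
  -- reduce to quadratic
  set D : ℝ := δ ^ 2 + 3 * δ * μ * σ / (κ * (δ + μ)) with hDdef
  have hD : 0 < D := by positivity
  have hs : Real.sqrt D ^ 2 = D := Real.sq_sqrt hD.le
  have key : (((1 * (l + l) - l * 1) / (l + l) ^ 2) * (δ * μ * σ / (δ + μ) ^ 2)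
        - ((0 + (δ / (δ + μ)) * ((0 * (l + l) - 1 * 1) / (l + l) ^ 2)) * (l * κ * (l + l))
            + (1 / (δ + μ) + (δ / (δ + μ)) * (1 / (l + l))) * (1 * κ * (l + l) + l * κ * 1)) = 0)
      ↔ (6 * l + δ) ^ 2 = D := by
    rw [hDdef]
    have hc : (8 * l ^ 4 * (δ + μ) ^ 2 : ℝ) ≠ 0 := by positivity
    constructor
    · intro h
      field_simp at h
      have hT : δ * μ * σ - 4 * κ * l * (δ + μ) * (3 * l + δ) = 0 := by
        have h2 : (8 * l ^ 4 * (δ + μ) ^ 2) *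
            (δ * μ * σ - 4 * κ * l * (δ + μ) * (3 * l + δ)) = 0 := by
          linear_combination (8 * l ^ 4 * (δ + μ) ^ 2) * h
        rcases mul_eq_zero.mp h2 with h3 | h3
        · exact absurd h3 hc
        · exact h3
      field_simp
      linear_combination (-3 : ℝ) * hT
    · intro h
      have hT : δ * μ * σ - 4 * κ * l * (δ + μ) * (3 * l + δ) = 0 := by
        field_simp at h
        linear_combination (-1/3 : ℝ) * h
      field_simp
      linear_combination hT
  rw [key]
  constructor
  · intro h
    have h6 : 0 < 6 * l + δ := by linarith
    have : Real.sqrt D = 6 * l + δ := by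
      rw [← h]; exact Real.sqrt_sq h6.le
    rw [this]; ring
  · intro h
    have h6 : 6 * l + δ = Real.sqrt D := by rw [h]; ring
    rw [h6, hs]
end

section
/- Let δ, μ, σ, κ > 0. Define λ_PC = (−δ + √(δ² + 3δμσ/(κ(δ+μ))))/6 and λ_OD = μσ/(4κ(δ+μ)). Then λ_OD > λ_PC. -/
theorem stmt_5 (δ μ σ κ : ℝ) (hδ : 0 < δ) (hμ : 0 < μ) (hσ : 0 < σ) (hκ : 0 < κ) :
    μ * σ / (4 * κ * (δ + μ)) >
      (-δ + Real.sqrt (δ ^ 2 + 3 * δ * μ * σ / (κ * (δ + μ)))) / 6 := by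
  have hd : 0 < δ + μ := by linarith
  have hA : 0 < μ * σ / (κ * (δ + μ)) := by positivity
  set A := μ * σ / (κ * (δ + μ)) with hAdef
  have h1 : 3 * δ * μ * σ / (κ * (δ + μ)) = 3 * δ * A := by
    rw [hAdef]; field_simp
  have hsq : Real.sqrt (δ ^ 2 + 3 * δ * μ * σ / (κ * (δ + μ))) < δ + 3 / 2 * A := by
    rw [h1]
    have hy : 0 < δ + 3 / 2 * A := by linarith
    rw [show δ + 3 / 2 * A = Real.sqrt ((δ + 3 / 2 * A) ^ 2) from
      (Real.sqrt_sq hy.le).symm]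
    apply Real.sqrt_lt_sqrt (by nlinarith)
    nlinarith
  have h2 : μ * σ / (4 * κ * (δ + μ)) = A / 4 := by
    rw [hAdef]; field_simp
  rw [h2]
  linarith
end

section
/- Let δ, μ, σ, κ > 0 and let λ_PC = (−δ + √(δ² + 3δμσ/(κ(δ+μ))))/6 and λ_OD = μσ/(4κ(δ+μ)). Then the equilibrium clearing price of computing power, p(λ) = 2κλ, is strictly higher in the decentralized market: 2κλ_OD > 2κλ_PC. -/
theorem stmt_6 (δ μ σ κ : ℝ) (hδ : 0 < δ) (hμ : 0 < μ) (hσ : 0 < σ) (hκ : 0 < κ) :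
    2 * κ * (μ * σ / (4 * κ * (δ + μ))) >
      2 * κ * ((-δ + Real.sqrt (δ ^ 2 + 3 * δ * μ * σ / (κ * (δ + μ)))) / 6) := by
  have hδμ : 0 < δ + μ := by linarith
  set A : ℝ := μ * σ / (κ * (δ + μ)) with hA
  have hApos : 0 < A := by positivity
  have hkey : Real.sqrt (δ ^ 2 + 3 * δ * μ * σ / (κ * (δ + μ))) < δ + 3 * A / 2 := by
    rw [Real.sqrt_lt' (by linarith)]
    have : 3 * δ * μ * σ / (κ * (δ + μ)) = 3 * δ * A := by
      rw [hA]; field_simp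
    rw [this]
    nlinarith
  have h4 : μ * σ / (4 * κ * (δ + μ)) = A / 4 := by
    rw [hA]; field_simp
  rw [h4]
  nlinarith [hkey, hκ, mul_pos hκ (sub_pos.mpr hkey)]
end

section
/- Let δ, μ, σ, κ > 0 and λ_PC = (−δ + √(δ² + 3δμσ/(κ(δ+μ))))/6, λ_OD = μσ/(4κ(δ+μ)). Then 1/(2λ_PC) > 1/(2λ_OD); i.e., the expected time from news arrival to the first order arrival is strictly shorter under on-demand speed. -/
theorem stmt_7 (δ μ σ κ : ℝ) (hδ : 0 < δ) (hμ : 0 < μ) (hσ : 0 < σ) (hκ : 0 < κ) :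
    1 / (2 * ((-δ + Real.sqrt (δ ^ 2 + 3 * δ * μ * σ / (κ * (δ + μ)))) / 6)) >
      1 / (2 * (μ * σ / (4 * κ * (δ + μ)))) := by
  have hδμ : 0 < δ + μ := by linarith
  have hA : 0 < μ * σ / (κ * (δ + μ)) := by positivity
  have harg : δ ^ 2 < δ ^ 2 + 3 * δ * μ * σ / (κ * (δ + μ)) := by
    have : 0 < 3 * δ * μ * σ / (κ * (δ + μ)) := by positivity
    linarith
  have hs_gt : δ < Real.sqrt (δ ^ 2 + 3 * δ * μ * σ / (κ * (δ + μ))) :=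
    (Real.lt_sqrt hδ.le).mpr harg
  have hs_lt : Real.sqrt (δ ^ 2 + 3 * δ * μ * σ / (κ * (δ + μ)))
      < δ + 3 * μ * σ / (2 * κ * (δ + μ)) := by
    rw [show δ + 3 * μ * σ / (2 * κ * (δ + μ)) = δ + 3 / 2 * (μ * σ / (κ * (δ + μ))) by
      field_simp]
    apply Real.sqrt_lt' (by positivity) |>.mpr
    have h1 : 3 * δ * μ * σ / (κ * (δ + μ)) = 3 * δ * (μ * σ / (κ * (δ + μ))) := by
      field_simp
    rw [h1]
    nlinarith [sq_nonneg (μ * σ / (κ * (δ + μ)))]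
  set s := Real.sqrt (δ ^ 2 + 3 * δ * μ * σ / (κ * (δ + μ))) with hs
  have hx : 0 < (-δ + s) / 6 := by linarith
  have hy : 0 < μ * σ / (4 * κ * (δ + μ)) := by positivity
  have hxy : (-δ + s) / 6 < μ * σ / (4 * κ * (δ + μ)) := by
    rw [div_lt_div_iff₀ (by norm_num) (by positivity)]
    have key : (s - δ) * (4 * κ * (δ + μ)) < 3 * μ * σ / (2 * κ * (δ + μ)) * (4 * κ * (δ + μ)) :=
      mul_lt_mul_of_pos_right (by linarith) (by positivity)
    have h3 : 3 * μ * σ / (2 * κ * (δ + μ)) * (4 * κ * (δ + μ)) = 6 * (μ * σ) := by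
      field_simp; ring
    nlinarith [key, h3]
  exact one_div_lt_one_div_of_lt (by linarith) (by linarith)
end

section
/- Let δ, μ, σ, κ > 0. Then π_PC := (δκ/(18(δ+μ)))·(δ + 6μσ/(κ(δ+μ)) − √(δ² + 3δμσ/(κ(δ+μ)))) is strictly greater than π_OD := δμσ/(4(δ+μ)²). -/
theorem stmt_13 (δ μ σ κ : ℝ) (hδ : 0 < δ) (hμ : 0 < μ) (hσ : 0 < σ) (hκ : 0 < κ) :
    (δ * κ / (18 * (δ + μ))) *
        (δ + 6 * μ * σ / (κ * (δ + μ))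
          - Real.sqrt (δ ^ 2 + 3 * δ * μ * σ / (κ * (δ + μ))))
      > δ * μ * σ / (4 * (δ + μ) ^ 2) := by
  have hd : 0 < δ + μ := by linarith
  have hk : 0 < κ * (δ + μ) := by positivity
  set t := μ * σ / (κ * (δ + μ)) with ht
  have htp : 0 < t := by positivity
  have h3 : 3 * δ * μ * σ / (κ * (δ + μ)) = 3 * δ * t := by
    rw [ht]; field_simp
  have h6 : 6 * μ * σ / (κ * (δ + μ)) = 6 * t := by
    rw [ht]; field_simp
  have hsq : Real.sqrt (δ ^ 2 + 3 * δ * μ * σ / (κ * (δ + μ))) < δ + 3 / 2 * t := by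
    rw [Real.sqrt_lt' (by linarith)]
    rw [h3]; nlinarith
  have hRHS : δ * μ * σ / (4 * (δ + μ) ^ 2) = (δ * κ / (18 * (δ + μ))) * (9 / 2 * t) := by
    rw [ht]; field_simp; ring
  rw [hRHS, h6]
  have hcoef : 0 < δ * κ / (18 * (δ + μ)) := by positivity
  have : (9 : ℝ) / 2 * t < δ + 6 * t - Real.sqrt (δ ^ 2 + 3 * δ * μ * σ / (κ * (δ + μ))) := by
    linarith
  exact mul_lt_mul_of_pos_left this hcoef
end

section
/- Let δ, μ, σ, κ > 0 and define f(σ) = 2(δ+μ)·(δκ − √(δκ·(δκ + 3μσ/(δ+μ)))) + 3μσ. Then f(0) = 0 and f'(σ) = 3μ·(1 − δκ/√(δκ(δκ + 3μσ/(δ+μ)))) > 0 for all σ > 0; consequently f(σ) > 0 for all σ > 0. -/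
theorem stmt_14 (δ μ κ : ℝ) (hδ : 0 < δ) (hμ : 0 < μ) (hκ : 0 < κ)
    (f : ℝ → ℝ)
    (hf : f = fun σ => 2 * (δ + μ) *
        (δ * κ - Real.sqrt (δ * κ * (δ * κ + 3 * μ * σ / (δ + μ)))) + 3 * μ * σ) :
    f 0 = 0 ∧
    (∀ σ > (0:ℝ),
      deriv f σ = 3 * μ *
        (1 - δ * κ / Real.sqrt (δ * κ * (δ * κ + 3 * μ * σ / (δ + μ)))) ∧
      0 < deriv f σ) ∧
    (∀ σ > (0:ℝ), 0 < f σ) := by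
  subst hf
  have hδμ : 0 < δ + μ := by linarith
  have hA : 0 < δ * κ := mul_pos hδ hκ
  refine ⟨?_, ?_, ?_⟩
  · simp only
    rw [show δ * κ + 3 * μ * 0 / (δ + μ) = δ * κ by field_simp; ring,
      Real.sqrt_mul_self hA.le]
    ring
  · intro σ hσ
    have hg : 0 < δ * κ * (δ * κ + 3 * μ * σ / (δ + μ)) := by
      apply mul_pos hA
      have : 0 < 3 * μ * σ / (δ + μ) := by positivity
      linarith
    have hs : 0 < Real.sqrt (δ * κ * (δ * κ + 3 * μ * σ / (δ + μ))) :=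
      Real.sqrt_pos.mpr hg
    have h1 : HasDerivAt (fun x : ℝ => δ * κ * (δ * κ + 3 * μ * x / (δ + μ)))
        (δ * κ * 3 * μ / (δ + μ)) σ := by
      have heq : (fun x : ℝ => δ * κ * (δ * κ + 3 * μ * x / (δ + μ))) =
          fun x : ℝ => δ * κ * (δ * κ) + (δ * κ * 3 * μ / (δ + μ)) * x := by
        funext x; field_simp
      rw [heq]
      simpa using ((hasDerivAt_id σ).const_mul (δ * κ * 3 * μ / (δ + μ))).const_add
        (δ * κ * (δ * κ))
    have h2 : HasDerivAt
        (fun x : ℝ => Real.sqrt (δ * κ * (δ * κ + 3 * μ * x / (δ + μ))))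
        ((1 / (2 * Real.sqrt (δ * κ * (δ * κ + 3 * μ * σ / (δ + μ))))) *
          (δ * κ * 3 * μ / (δ + μ))) σ :=
      (Real.hasDerivAt_sqrt (ne_of_gt hg)).comp σ h1
    have h3 : HasDerivAt
        (fun x : ℝ => 2 * (δ + μ) *
          (δ * κ - Real.sqrt (δ * κ * (δ * κ + 3 * μ * x / (δ + μ)))) + 3 * μ * x)
        (2 * (δ + μ) *
          (0 - (1 / (2 * Real.sqrt (δ * κ * (δ * κ + 3 * μ * σ / (δ + μ))))) *
            (δ * κ * 3 * μ / (δ + μ))) + 3 * μ * 1) σ :=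
      (((hasDerivAt_const σ (δ * κ)).sub h2).const_mul (2 * (δ + μ))).add
        ((hasDerivAt_id σ).const_mul (3 * μ))
    have hderiv : deriv (fun x : ℝ => 2 * (δ + μ) *
        (δ * κ - Real.sqrt (δ * κ * (δ * κ + 3 * μ * x / (δ + μ)))) + 3 * μ * x) σ =
        3 * μ * (1 - δ * κ / Real.sqrt (δ * κ * (δ * κ + 3 * μ * σ / (δ + μ)))) := by
      rw [h3.deriv]
      field_simp
      ring
    refine ⟨hderiv, ?_⟩
    rw [hderiv]
    have hlt : δ * κ < Real.sqrt (δ * κ * (δ * κ + 3 * μ * σ / (δ + μ))) := by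
      have h' : (δ * κ) ^ 2 < δ * κ * (δ * κ + 3 * μ * σ / (δ + μ)) := by
        have : 0 < 3 * μ * σ / (δ + μ) := by positivity
        nlinarith
      calc δ * κ = Real.sqrt ((δ * κ) ^ 2) := (Real.sqrt_sq hA.le).symm
        _ < _ := Real.sqrt_lt_sqrt (by positivity) h'
    have : δ * κ / Real.sqrt (δ * κ * (δ * κ + 3 * μ * σ / (δ + μ))) < 1 :=
      (div_lt_one hs).mpr hlt
    nlinarith
  · intro σ hσ
    simp only
    have hg : 0 ≤ δ * κ * (δ * κ + 3 * μ * σ / (δ + μ)) := by positivity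
    set s := Real.sqrt (δ * κ * (δ * κ + 3 * μ * σ / (δ + μ))) with hsdef
    have hs0 : 0 ≤ s := Real.sqrt_nonneg _
    have hs2 : s ^ 2 = δ * κ * (δ * κ + 3 * μ * σ / (δ + μ)) := Real.sq_sqrt hg
    have key : (2 * (δ + μ) * (δ * κ) + 3 * μ * σ) ^ 2 - (2 * (δ + μ) * s) ^ 2 =
        9 * μ ^ 2 * σ ^ 2 := by
      rw [mul_pow, hs2]; field_simp; ring
    nlinarith [sq_nonneg (2 * (δ + μ) * (δ * κ) + 3 * μ * σ + 2 * (δ + μ) * s),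
      mul_pos hμ hσ, mul_pos hδμ hA]
end
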